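/- Let φ : D → D' be a transformation of presheaves D, D' : C^op → Cat, let f : X → Y be a map in C, and let {Y_i → Y} be a family of maps such that the functors {D'(Y) → D'(Y_i)} are jointly conservative. Suppose for each i that D and D' have right base change for f against Y_i → Y (i.e., the pullbacks X_i = X ×_Y Y_i exist and the squares D(Y) → D(X), D(Y_i) → D(X_i) are right adjointable for both D and D'), and that φ is right adjointable at each base change f_i : X_i → Y_i. Then φ is right adjointable at f. -/

import Mathlib

open CategoryTheory Category Limits Opposite

universe w v u v₂ u₂ v₃ u₃ v₄ u₄

section Mates

variable {A : Type u} {B : Type u₂} {E : Type u₃} {F : Type u₄}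
variable [Category.{v} A] [Category.{v₂} B] [Category.{v₃} E] [Category.{v₄} F]
variable {G : A ⥤ E} {H : B ⥤ F} {L₁ : A ⥤ B} {R₁ : B ⥤ A} {L₂ : E ⥤ F} {R₂ : F ⥤ E}

/-- The mate of a strictly commuting square of left adjoints. -/
noncomputable def mateOfEq (a₁ : L₁ ⊣ R₁) (a₂ : L₂ ⊣ R₂)
    (h : G ⋙ L₂ = L₁ ⋙ H) : R₁ ⋙ G ⟶ H ⋙ R₂ :=
  mateEquiv a₁ a₂ (eqToHom h)

end Mates

variable {C : Type u} [Category.{v} C]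

/-- Functoriality of a `Cat`-valued presheaf on a commuting square. -/
theorem map_sq (D : Cᵒᵖ ⥤ Cat.{v₂, u₂})
    {X' X Y' Y : C} {f : X ⟶ Y} {f' : X' ⟶ Y'} {p : X' ⟶ X} {q : Y' ⟶ Y}
    (w : f' ≫ q = p ≫ f) :
    (D.map f.op).toFunctor ⋙ (D.map p.op).toFunctor = (D.map q.op).toFunctor ⋙ (D.map f'.op).toFunctor := by
  calc (D.map f.op).toFunctor ⋙ (D.map p.op).toFunctor = (D.map f.op ≫ D.map p.op).toFunctor := rfl
    _ = (D.map ((p ≫ f).op)).toFunctor := by rw [op_comp, D.map_comp]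
    _ = (D.map ((f' ≫ q).op)).toFunctor := by rw [w]
    _ = (D.map q.op ≫ D.map f'.op).toFunctor := by rw [op_comp, D.map_comp]
    _ = (D.map q.op).toFunctor ⋙ (D.map f'.op).toFunctor := rfl

/-- Strict naturality square of a transformation of `Cat`-valued presheaves. -/
theorem nat_sq {D D' : Cᵒᵖ ⥤ Cat.{v₂, u₂}} (φ : D ⟶ D') {X Y : C} (f : X ⟶ Y) :
    (φ.app (op Y)).toFunctor ⋙ (D'.map f.op).toFunctor = (D.map f.op).toFunctor ⋙ (φ.app (op X)).toFunctor :=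
  congrArg Cat.Hom.toFunctor (φ.naturality f.op).symm

section AuxMates

variable {A : Type u} {B : Type u₂} {E : Type u₃} {F : Type u₄}
variable [Category.{v} A] [Category.{v₂} B] [Category.{v₃} E] [Category.{v₄} F]
variable {L₁ : A ⥤ B} {R₁ : B ⥤ A} {L₂ : E ⥤ F} {R₂ : F ⥤ E}

/-- `mateEquiv` is compatible with conjugation by `eqToHom`s. -/
theorem mateEquiv_conj (a₁ : L₁ ⊣ R₁) (a₂ : L₂ ⊣ R₂)
    {G G' : A ⥤ E} {H H' : B ⥤ F} (hG : G = G') (hH : H' = H)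
    (σ : G' ⋙ L₂ ⟶ L₁ ⋙ H') :
    mateEquiv a₁ a₂
      ((eqToHom (by rw [hG]) : G ⋙ L₂ ⟶ G' ⋙ L₂) ≫ σ ≫
        (eqToHom (by rw [hH]) : L₁ ⋙ H' ⟶ L₁ ⋙ H)) =
      (eqToHom (by rw [hG]) : R₁ ⋙ G ⟶ R₁ ⋙ G') ≫ mateEquiv a₁ a₂ σ ≫
        (eqToHom (by rw [hH]) : H' ⋙ R₂ ⟶ H ⋙ R₂) := by
  subst hG hH
  simp
  exact (Category.comp_id _).symm

end AuxMates

/-- Locality on the target of right adjointability.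
Let `φ : D ⟶ D'` be a transformation of presheaves of categories, `f : X ⟶ Y` a map,
and `{yᵢ : Yᵢ ⟶ Y}` a `D'`-pseudocover (the functors `D'(Y) ⥤ D'(Yᵢ)` are jointly
conservative).  If `D` and `D'` have right base change for `f` against each `yᵢ`
(the Beck–Chevalley maps `f_* ⋙ yᵢ^* ⟶ pᵢ^* ⋙ (fᵢ)_*` are invertible), and `φ` is
right adjointable at each base change `fᵢ : Xᵢ ⟶ Yᵢ`, then `φ` is right adjointable
at `f`. -/
theorem right_adjointable_local_on_target
    {D D' : Cᵒᵖ ⥤ Cat.{v₂, u₂}} (φ : D ⟶ D')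
    {X Y : C} (f : X ⟶ Y)
    {ι : Type w} {Yi : ι → C} {Xi : ι → C}
    (yi : ∀ i, Yi i ⟶ Y) (fi : ∀ i, Xi i ⟶ Yi i) (pi : ∀ i, Xi i ⟶ X)
    (sq : ∀ i, IsPullback (fi i) (pi i) (yi i) f)
    -- right adjoints `f_*` of the pullback functors, for `D` and `D'`
    {Rf : ↑(D.obj (op X)) ⥤ ↑(D.obj (op Y))} (aRf : (D.map f.op).toFunctor ⊣ Rf)
    {Rf' : ↑(D'.obj (op X)) ⥤ ↑(D'.obj (op Y))} (aRf' : (D'.map f.op).toFunctor ⊣ Rf')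
    {Rfi : ∀ i, ↑(D.obj (op (Xi i))) ⥤ ↑(D.obj (op (Yi i)))}
    (aRfi : ∀ i, (D.map (fi i).op).toFunctor ⊣ Rfi i)
    {Rfi' : ∀ i, ↑(D'.obj (op (Xi i))) ⥤ ↑(D'.obj (op (Yi i)))}
    (aRfi' : ∀ i, (D'.map (fi i).op).toFunctor ⊣ Rfi' i)
    -- `{yᵢ}` is a `D'`-pseudocover
    (hconsv : ∀ {M N : ↑(D'.obj (op Y))} (g : M ⟶ N),
      (∀ i, IsIso ((D'.map (yi i).op).toFunctor.map g)) → IsIso g)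
    -- `D` and `D'` have right base change for `f` against each `yᵢ`
    (hbcD : ∀ i, IsIso (mateOfEq aRf (aRfi i) (map_sq D (sq i).w).symm))
    (hbcD' : ∀ i, IsIso (mateOfEq aRf' (aRfi' i) (map_sq D' (sq i).w).symm))
    -- `φ` is right adjointable at each `fᵢ`
    (hφ : ∀ i, IsIso (mateOfEq (aRfi i) (aRfi' i) (nat_sq φ (fi i)))) :
    IsIso (mateOfEq aRf aRf' (nat_sq φ f)) := by
  set τ := mateOfEq aRf aRf' (nat_sq φ f) with hτ
  suffices h : ∀ (M : ↑(D.obj (op X))), IsIso (τ.app M) from NatIso.isIso_of_isIso_app τ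
  intro M
  apply hconsv
  intro i
  haveI := hbcD i
  haveI := hbcD' i
  haveI := hφ i
  set β' := mateOfEq aRf' (aRfi' i) ((map_sq D' (sq i).w).symm) with hβ'
  -- the pasting identity on the level of squares of left adjoints
  have key : TwoSquare.hComp (T := (φ.app (op Y)).toFunctor) (B := (φ.app (op X)).toFunctor)
      (eqToHom (nat_sq φ f)) (eqToHom ((map_sq D' (sq i).w).symm)) =
      (eqToHom (by rw [nat_sq φ (yi i)]) :
        ((φ.app (op Y)).toFunctor ⋙ (D'.map (yi i).op).toFunctor) ⋙ (D'.map (fi i).op).toFunctor ⟶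
          ((D.map (yi i).op).toFunctor ⋙ (φ.app (op (Yi i))).toFunctor) ⋙ (D'.map (fi i).op).toFunctor) ≫
      TwoSquare.hComp (eqToHom ((map_sq D (sq i).w).symm))
        (eqToHom (nat_sq φ (fi i))) ≫
      (eqToHom (by rw [← nat_sq φ (pi i)]) :
        (D.map f.op).toFunctor ⋙ ((D.map (pi i).op).toFunctor ⋙ (φ.app (op (Xi i))).toFunctor) ⟶
          (D.map f.op).toFunctor ⋙ ((φ.app (op X)).toFunctor ⋙ (D'.map (pi i).op).toFunctor)) := by
    ext x
    simp [TwoSquare.hComp, eqToHom_map, eqToHom_app]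
  -- the pasting identity on the level of mates
  have paste : TwoSquare.vComp τ β' =
      (eqToHom (by rw [nat_sq φ (yi i)]) :
        Rf ⋙ ((φ.app (op Y)).toFunctor ⋙ (D'.map (yi i).op).toFunctor) ⟶
          Rf ⋙ ((D.map (yi i).op).toFunctor ⋙ (φ.app (op (Yi i))).toFunctor)) ≫
      TwoSquare.vComp (mateOfEq aRf (aRfi i) ((map_sq D (sq i).w).symm))
        (mateOfEq (aRfi i) (aRfi' i) (nat_sq φ (fi i))) ≫
      (eqToHom (by rw [← nat_sq φ (pi i)]) :
        ((D.map (pi i).op).toFunctor ⋙ (φ.app (op (Xi i))).toFunctor) ⋙ Rfi' i ⟶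
          ((φ.app (op X)).toFunctor ⋙ (D'.map (pi i).op).toFunctor) ⋙ Rfi' i) := by
    rw [hτ, hβ']
    unfold mateOfEq
    erw [← mateEquiv_vcomp aRf aRf' (aRfi' i), key,
      mateEquiv_conj aRf (aRfi' i) (nat_sq φ (yi i)) ((nat_sq φ (pi i)).symm),
      mateEquiv_vcomp aRf (aRfi i) (aRfi' i)]
  have hI : IsIso (TwoSquare.vComp τ β') := by
    rw [paste]
    have h1 : IsIso (TwoSquare.vComp (mateOfEq aRf (aRfi i) ((map_sq D (sq i).w).symm))
        (mateOfEq (aRfi i) (aRfi' i) (nat_sq φ (fi i))) : _ ⟶ _) := by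
      unfold TwoSquare.vComp
      dsimp only [TwoSquare.mk, TwoSquare.natTrans]
      infer_instance
    exact @IsIso.comp_isIso _ _ _ _ _ _ _ _ (@IsIso.comp_isIso _ _ _ _ _ _ _ h1 _)
  have e : (TwoSquare.vComp τ β').app M =
      ((D'.map (yi i).op).toFunctor).map (τ.app M) ≫ β'.app (((φ.app (op X)).toFunctor).obj M) := by
    simp [TwoSquare.vComp]
  haveI : IsIso (((D'.map (yi i).op).toFunctor).map (τ.app M) ≫ β'.app (((φ.app (op X)).toFunctor).obj M)) := by
    rw [← e]; exact NatIso.isIso_app_of_isIso (TwoSquare.vComp τ β' : _ ⟶ _) M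
  exact IsIso.of_isIso_comp_right (((D'.map (yi i).op).toFunctor).map (τ.app M))
    (β'.app (((φ.app (op X)).toFunctor).obj M))
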